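/- For all d, n, m ≥ 0 with n ≥ 1, the plethysm of the hook Schur function with s_{(d)} specializes to a product of two quantum binomials: (s_{(n,1^m)} ∘ s_{(d)})(q, q^{−1}) = [n+m−1 choose m]_Q · [n+d choose n+m]_Q. -/

import Mathlib

open LaurentPolynomial MvPolynomial



/-- The quantum integer `[m] = q^{-m+1} + q^{-m+3} + ⋯ + q^{m-1}` in `ℤ[q,q⁻¹]`. -/
noncomputable def qint (m : ℕ) : LaurentPolynomial ℤ :=
  ∑ t ∈ Finset.range m, T (2 * (t : ℤ) - ((m : ℤ) - 1))


noncomputable def qfact (k : ℕ) : LaurentPolynomial ℤ :=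
  ∏ t ∈ Finset.range k, qint (t + 1)

noncomputable def qP (a b : ℕ) : LaurentPolynomial ℤ :=
  ∏ t ∈ Finset.range b, qint (a - t)

lemma qint_zero : qint 0 = 0 := by simp [qint]

noncomputable def ev1 : LaurentPolynomial ℤ →ₐ[ℤ] ℤ :=
  AddMonoidAlgebra.lift ℤ ℤ ℤ 1

lemma ev1_T (k : ℤ) : ev1 (T k) = 1 := by
  have : (T k : LaurentPolynomial ℤ) = AddMonoidAlgebra.single k 1 := rfl
  rw [ev1, this, AddMonoidAlgebra.lift_single]
  simp

lemma ev1_qint (m : ℕ) : ev1 (qint m) = m := by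
  rw [qint, map_sum]
  simp [ev1_T]

lemma qint_ne_zero {m : ℕ} (h : m ≠ 0) : qint m ≠ 0 := by
  intro hc
  have := ev1_qint m
  rw [hc, map_zero] at this
  exact_mod_cast h (by exact_mod_cast this.symm)

lemma qfact_ne_zero (k : ℕ) : qfact k ≠ 0 := by
  rw [qfact]
  exact Finset.prod_ne_zero_iff.2 fun t _ => qint_ne_zero (Nat.succ_ne_zero t)

lemma qfact_succ (k : ℕ) : qfact (k + 1) = qfact k * qint (k + 1) :=
  Finset.prod_range_succ _ _

lemma qP_succ (a b : ℕ) : qP a (b + 1) = qP a b * qint (a - b) :=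
  Finset.prod_range_succ _ _

lemma qP_top (a b : ℕ) : qP (a + 1) (b + 1) = qint (a + 1) * qP a b := by
  rw [qP, Finset.prod_range_succ']
  simp only [Nat.succ_sub_succ]
  rw [Nat.sub_zero, mul_comm]
  rfl

lemma qP_zero_of_lt {a b : ℕ} (h : a < b) : qP a b = 0 := by
  apply Finset.prod_eq_zero (Finset.mem_range.2 h)
  simp [qint_zero]

lemma qP_self (a : ℕ) : qP a a = qfact a := by
  rw [qP, qfact, ← Finset.prod_range_reflect]
  apply Finset.prod_congr rfl
  intro t ht
  simp only [Finset.mem_range] at ht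
  congr 1
  omega

lemma qP_split (a b k : ℕ) : qP a (b + k) = qP a b * qP (a - b) k := by
  rw [qP, Finset.prod_range_add]
  congr 1
  apply Finset.prod_congr rfl
  intro t ht
  show qint (a - (b + t)) = qint (a - b - t)
  congr 1
  omega

lemma qP_fact (b k : ℕ) : qP (b + k) b * qfact k = qfact (b + k) := by
  have h1 : qfact (b + k) = qfact k * ∏ t ∈ Finset.range b, qint (k + t + 1) := by
    rw [qfact, add_comm b k, Finset.prod_range_add]
    rfl
  have h2 : qP (b + k) b = ∏ t ∈ Finset.range b, qint (k + t + 1) := by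
    rw [qP, ← Finset.prod_range_reflect]
    apply Finset.prod_congr rfl
    intro t ht
    simp only [Finset.mem_range] at ht
    congr 1
    omega
  rw [h1, h2]
  ring

lemma T_mul_qint (x : ℤ) (m : ℕ) :
    T x * qint m = ∑ t ∈ Finset.range m, T (x + (2 * (t : ℤ) - ((m : ℤ) - 1))) := by
  rw [qint, Finset.mul_sum]
  refine Finset.sum_congr rfl fun t _ => ?_
  rw [← T_add]

lemma qint_split (b c : ℕ) :
    qint (b + 1 + c) = T (-(c : ℤ)) * qint (b + 1) + T ((b : ℤ) + 1) * qint c := by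
  rw [T_mul_qint, T_mul_qint, qint, Finset.sum_range_add]
  congr 1
  · apply Finset.sum_congr rfl; intro t ht; congr 1; push_cast; ring
  · apply Finset.sum_congr rfl; intro t ht; congr 1; push_cast; ring

lemma qint_split' (b c : ℕ) :
    qint (b + 1 + c) = T ((c : ℤ)) * qint (b + 1) + T (-((b : ℤ) + 1)) * qint c := by
  rw [T_mul_qint, T_mul_qint, qint]
  rw [show b + 1 + c = c + (b + 1) by ring, Finset.sum_range_add, add_comm]
  congr 1
  · apply Finset.sum_congr rfl; intro t ht; congr 1; push_cast; ring
  · apply Finset.sum_congr rfl; intro t ht; congr 1; push_cast; ring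

noncomputable def cB : ℕ → ℕ → LaurentPolynomial ℤ
  | _, 0 => 1
  | 0, _ + 1 => 0
  | a + 1, b + 1 => T ((b : ℤ) - a) * cB a b + T ((b : ℤ) + 1) * cB a (b + 1)

lemma cB_zero_right (a : ℕ) : cB a 0 = 1 := by cases a <;> rfl

lemma cB_pascal1 (a b : ℕ) :
    cB (a + 1) (b + 1) = T ((b : ℤ) - a) * cB a b + T ((b : ℤ) + 1) * cB a (b + 1) := rfl

lemma qfact_mul_cB : ∀ a b : ℕ, qfact b * cB a b = qP a b := by
  intro a
  induction a with
  | zero =>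
    intro b
    cases b with
    | zero => simp [cB_zero_right, qfact, qP]
    | succ b =>
      show qfact (b + 1) * cB 0 (b + 1) = qP 0 (b + 1)
      rw [show cB 0 (b + 1) = 0 from rfl, mul_zero, qP_zero_of_lt (Nat.succ_pos b)]
  | succ a ih =>
    intro b
    cases b with
    | zero => simp [cB_zero_right, qfact, qP]
    | succ b =>
      rw [cB_pascal1, mul_add, qfact_succ]
      rw [show qfact b * qint (b + 1) * (T ((b : ℤ) - a) * cB a b)
            = T ((b : ℤ) - a) * qint (b + 1) * (qfact b * cB a b) by ring, ih b]
      rw [show qfact b * qint (b + 1) * (T ((b : ℤ) + 1) * cB a (b + 1))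
            = T ((b : ℤ) + 1) * (qfact b * qint (b + 1) * cB a (b + 1)) by ring,
          ← qfact_succ, ih (b + 1)]
      by_cases hba : b ≤ a
      · rw [qP_succ a b, qP_top a b]
        have hc : a + 1 = b + 1 + (a - b) := by omega
        have hs := qint_split b (a - b)
        rw [← hc] at hs
        rw [hs]
        have hcast : ((a - b : ℕ) : ℤ) = (a : ℤ) - b := by omega
        rw [hcast]
        ring
      · push_neg at hba
        rw [qP_zero_of_lt (by omega : a < b), qP_zero_of_lt (by omega : a < b + 1),
            qP_zero_of_lt (by omega : a + 1 < b + 1)]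
        ring

lemma cB_cancel {x y : LaurentPolynomial ℤ} (k : ℕ) (h : qfact k * x = qfact k * y) : x = y :=
  mul_left_cancel₀ (qfact_ne_zero k) h

lemma cB_self (a : ℕ) : cB a a = 1 := by
  apply cB_cancel a
  rw [qfact_mul_cB, qP_self, mul_one]

lemma cB_eq_zero_of_lt {a b : ℕ} (h : a < b) : cB a b = 0 := by
  apply cB_cancel b
  rw [qfact_mul_cB, qP_zero_of_lt h, mul_zero]

lemma cB_pascal2 (a b : ℕ) :
    cB (a + 1) (b + 1) = T ((a : ℤ) - b) * cB a b + T (-((b : ℤ) + 1)) * cB a (b + 1) := by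
  apply cB_cancel (b + 1)
  rw [qfact_mul_cB, mul_add,
      show qfact (b + 1) * (T ((a : ℤ) - b) * cB a b)
        = T ((a : ℤ) - b) * qint (b + 1) * (qfact b * cB a b) by rw [qfact_succ]; ring,
      qfact_mul_cB,
      show qfact (b + 1) * (T (-((b : ℤ) + 1)) * cB a (b + 1))
        = T (-((b : ℤ) + 1)) * (qfact (b + 1) * cB a (b + 1)) by ring,
      qfact_mul_cB]
  by_cases hba : b ≤ a
  · rw [qP_succ a b, qP_top a b]
    have hc : a + 1 = b + 1 + (a - b) := by omega
    have hs := qint_split' b (a - b)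
    rw [← hc] at hs
    rw [hs]
    have hcast : ((a - b : ℕ) : ℤ) = (a : ℤ) - b := by omega
    rw [hcast]
    ring
  · push_neg at hba
    rw [qP_zero_of_lt (by omega : a < b), qP_zero_of_lt (by omega : a < b + 1),
        qP_zero_of_lt (by omega : a + 1 < b + 1)]
    ring

lemma cB_symm (x y : ℕ) : cB (x + y) y = cB (x + y) x := by
  apply cB_cancel y
  apply cB_cancel x
  have h1 : qfact x * (qfact y * cB (x + y) y) = qfact (x + y) := by
    rw [qfact_mul_cB, show x + y = y + x from add_comm x y, ← qP_fact y x]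
    ring
  have h2 : qfact x * (qfact y * cB (x + y) x) = qfact (x + y) := by
    rw [show qfact x * (qfact y * cB (x + y) x) = qfact y * (qfact x * cB (x + y) x) by ring,
        qfact_mul_cB, ← qP_fact x y]
    ring
  rw [h1, h2]

lemma cB_chain (a b k : ℕ) : cB a (b + k) * cB (b + k) b = cB a b * cB (a - b) k := by
  apply cB_cancel (b + k)
  apply cB_cancel b
  apply cB_cancel k
  have l1 : qfact k * (qfact b * (qfact (b + k) * (cB a (b + k) * cB (b + k) b)))
      = qP a (b + k) * (qP (b + k) b * qfact k) := by
    rw [← qfact_mul_cB a (b + k), ← qfact_mul_cB (b + k) b]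
    ring
  have l2 : qfact k * (qfact b * (qfact (b + k) * (cB a b * cB (a - b) k)))
      = (qP a b * qP (a - b) k) * qfact (b + k) := by
    rw [← qfact_mul_cB a b, ← qfact_mul_cB (a - b) k]
    ring
  rw [l1, l2, qP_fact b k, qP_split a b k]

lemma identity_I (d n m : ℕ) :
    cB (n + m) (m + 1) * cB (n + d) (n + m + 1) + cB (n + m) m * cB (n + d + 1) (n + m + 1)
      = cB (n + d) n * cB (d + 1) (m + 1) := by
  have hb : cB (n + m) (m + 1) + T ((n : ℤ) + (m : ℤ) + 1) * cB (n + m) m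
      = T ((m : ℤ) + 1) * cB (n + m + 1) (m + 1) := by
    rw [cB_pascal2 (n + m) m, mul_add, ← mul_assoc, ← mul_assoc, ← T_add, ← T_add,
        show ((m : ℤ) + 1) + (((n + m : ℕ) : ℤ) - (m : ℤ)) = (n : ℤ) + (m : ℤ) + 1 by
          push_cast; ring,
        show ((m : ℤ) + 1) + (-((m : ℤ) + 1)) = 0 by ring, T_zero, one_mul]
    ring
  have e3 : cB (n + m + 1) (m + 1) = cB (n + m + 1) n := by
    have := cB_symm n (m + 1)
    rwa [show n + (m + 1) = n + m + 1 by ring] at this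
  have e4 : cB (n + m) m = cB (n + m) n := cB_symm n m
  have e5 : cB (n + d) (n + m + 1) * cB (n + m + 1) n = cB (n + d) n * cB d (m + 1) := by
    have := cB_chain (n + d) n (m + 1)
    rwa [show n + (m + 1) = n + m + 1 by ring, show n + d - n = d by omega] at this
  have e6 : cB (n + d) (n + m) * cB (n + m) n = cB (n + d) n * cB d m := by
    have := cB_chain (n + d) n m
    rwa [show n + d - n = d by omega] at this
  calc cB (n + m) (m + 1) * cB (n + d) (n + m + 1) + cB (n + m) m * cB (n + d + 1) (n + m + 1)
      = cB (n + m) (m + 1) * cB (n + d) (n + m + 1)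
        + cB (n + m) m * (T ((m : ℤ) - (d : ℤ)) * cB (n + d) (n + m)
            + T ((n : ℤ) + (m : ℤ) + 1) * cB (n + d) (n + m + 1)) := by
        rw [cB_pascal1 (n + d) (n + m),
            show ((n + m : ℕ) : ℤ) - ((n + d : ℕ) : ℤ) = (m : ℤ) - (d : ℤ) by push_cast; ring,
            show ((n + m : ℕ) : ℤ) + 1 = (n : ℤ) + (m : ℤ) + 1 by push_cast; ring]
    _ = (cB (n + m) (m + 1) + T ((n : ℤ) + (m : ℤ) + 1) * cB (n + m) m) * cB (n + d) (n + m + 1)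
        + T ((m : ℤ) - (d : ℤ)) * (cB (n + m) m * cB (n + d) (n + m)) := by ring
    _ = T ((m : ℤ) + 1) * (cB (n + d) (n + m + 1) * cB (n + m + 1) n)
        + T ((m : ℤ) - (d : ℤ)) * (cB (n + d) (n + m) * cB (n + m) n) := by
        rw [hb, e3, e4]; ring
    _ = cB (n + d) n * (T ((m : ℤ) - (d : ℤ)) * cB d m + T ((m : ℤ) + 1) * cB d (m + 1)) := by
        rw [e5, e6]; ring
    _ = cB (n + d) n * cB (d + 1) (m + 1) := by
        rw [cB_pascal1 d m]



noncomputable def wgt (d : ℕ) : Fin (d + 1) → LaurentPolynomial ℤ :=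
  fun t => T (2 * (t : ℤ) - d)

noncomputable def Asum (d r : ℕ) : LaurentPolynomial ℤ :=
  ∑ s : Sym (Fin (d + 1)) r, (s.1.map (wgt d)).prod

lemma Asum_zero (d : ℕ) : Asum d 0 = 1 := by
  rw [Asum, Fintype.sum_unique]
  have h0 : (default : Sym (Fin (d + 1)) 0) = Sym.nil := Sym.eq_nil_of_card_zero _
  have h1 : ∀ s : Sym (Fin (d + 1)) 0, ((s : Multiset (Fin (d + 1))).map (wgt d)).prod = 1 := by
    intro s
    obtain rfl : s = Sym.nil := Sym.eq_nil_of_card_zero s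
    simp
  exact h1 _

lemma Asum_onevar (r : ℕ) : Asum 0 r = 1 := by
  rw [Asum]
  have hw : wgt 0 = fun _ => (1 : LaurentPolynomial ℤ) := by
    funext t
    have : (t : ℤ) = 0 := by omega
    simp [wgt, this]
  rw [hw]
  simp [Multiset.map_const', Multiset.prod_replicate]

lemma Asum_rec (d r : ℕ) :
    Asum (d + 1) (r + 1)
      = T ((d : ℤ) + 1) * Asum (d + 1) r + T (-((r : ℤ) + 1)) * Asum d (r + 1) := by
  classical
  set w : Option (Fin (d + 1)) → LaurentPolynomial ℤ :=
    fun o => T (2 * ((finSuccEquivLast.symm o : Fin (d + 2)) : ℤ) - ((d : ℤ) + 1)) with hw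
  have transfer : ∀ k : ℕ, Asum (d + 1) k = ∑ s : Sym (Option (Fin (d + 1))) k,
      ((s : Multiset (Option (Fin (d + 1)))).map w).prod := by
    intro k
    rw [Asum]
    apply Fintype.sum_equiv (Sym.equivCongr (finSuccEquivLast (n := d + 1)))
    intro s
    rw [show Sym.equivCongr (finSuccEquivLast (n := d + 1)) s
          = Sym.map (⇑finSuccEquivLast) s from rfl, Sym.coe_map, Multiset.map_map]
    congr 1
    apply Multiset.map_congr rfl
    intro t _
    simp only [Function.comp_apply, hw, Equiv.symm_apply_apply]
    rfl
  rw [transfer (r + 1)]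
  rw [Fintype.sum_equiv (symOptionSuccEquiv (α := Fin (d + 1)) (n := r))
    _ (fun x => (((SymOptionSuccEquiv.decode x) : Multiset (Option (Fin (d + 1)))).map w).prod)
    (by intro s
        simp only [symOptionSuccEquiv, Equiv.coe_fn_mk, SymOptionSuccEquiv.decode_encode])]
  rw [Fintype.sum_sum_type]
  congr 1
  · -- none part
    rw [transfer r, Finset.mul_sum]
    apply Finset.sum_congr rfl
    intro s _
    rw [SymOptionSuccEquiv.decode_inl, Sym.coe_cons, Multiset.map_cons, Multiset.prod_cons]
    congr 1
    simp only [hw, finSuccEquivLast_symm_none]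
    congr 1
    rw [Fin.val_last]
    push_cast
    ring
  · -- some part
    rw [Asum, Finset.mul_sum]
    apply Finset.sum_congr rfl
    intro s _
    rw [SymOptionSuccEquiv.decode_inr, Sym.coe_map, Multiset.map_map]
    have hws : (w ∘ Function.Embedding.some) = fun i : Fin (d + 1) => T (-1) * wgt d i := by
      funext i
      simp only [Function.comp_apply, hw, Function.Embedding.some_apply,
        finSuccEquivLast_symm_some, wgt]
      rw [← T_add]
      congr 1
      rw [Fin.coe_castSucc]
      ring
    rw [hws, Multiset.prod_map_mul]
    have hcard : Multiset.card (s : Multiset (Fin (d + 1))) = r + 1 := s.2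
    rw [Multiset.map_const', hcard, Multiset.prod_replicate, T_pow]
    congr 2
    push_cast
    ring

lemma Asum_eq : ∀ d r : ℕ, Asum d r = cB (d + r) r := by
  intro d
  induction d with
  | zero => intro r; rw [Asum_onevar, Nat.zero_add, cB_self]
  | succ d ihd =>
    intro r
    induction r with
    | zero => rw [Asum_zero, cB_zero_right]
    | succ r ihr =>
      rw [Asum_rec, ihr, ihd (r + 1)]
      have hp := cB_pascal2 (d + r + 1) r
      rw [show d + 1 + (r + 1) = d + r + 1 + 1 by ring, hp,
          show ((d + r + 1 : ℕ) : ℤ) - (r : ℤ) = (d : ℤ) + 1 by push_cast; ring,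
          show d + 1 + r = d + r + 1 by ring, show d + (r + 1) = d + r + 1 by ring]

lemma aeval_hsymm (d r : ℕ) :
    aeval (fun t : Fin (d + 1) => T (2 * (t : ℤ) - (d : ℤ))) (hsymm (Fin (d + 1)) ℤ r)
      = cB (d + r) r := by
  rw [← Asum_eq, Asum, hsymm, map_sum]
  refine Finset.sum_congr rfl fun s _ => ?_
  rw [map_multiset_prod, Multiset.map_map]
  congr 1
  apply Multiset.map_congr rfl
  intro t _
  simp [wgt]



noncomputable def Hq (d : ℕ) (z : ℤ) : LaurentPolynomial ℤ :=
  if 0 ≤ z then cB (d + z.toNat) z.toNat else 0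

lemma Hq_ofNat (d k : ℕ) : Hq d (k : ℤ) = cB (d + k) k := by
  rw [Hq, if_pos (Int.natCast_nonneg k), Int.toNat_natCast]

lemma Hq_neg {d : ℕ} {z : ℤ} (h : z < 0) : Hq d z = 0 := if_neg (not_le.2 h)

lemma Hq_zero (d : ℕ) : Hq d 0 = 1 := by
  rw [show (0 : ℤ) = ((0 : ℕ) : ℤ) by simp, Hq_ofNat, Nat.add_zero, cB_zero_right]

noncomputable def Dmat (d n m : ℕ) : Matrix (Fin (m + 1)) (Fin (m + 1)) (LaurentPolynomial ℤ) :=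
  Matrix.of fun i j =>
    if (i : ℕ) = 0 then Hq d ((n : ℤ) + ((j : ℕ) : ℤ))
    else Hq d (((j : ℕ) : ℤ) - ((i : ℕ) : ℤ) + 1)

lemma Dmat_apply (d n m : ℕ) (i j : Fin (m + 1)) :
    Dmat d n m i j = if (i : ℕ) = 0 then Hq d ((n : ℤ) + ((j : ℕ) : ℤ))
      else Hq d (((j : ℕ) : ℤ) - ((i : ℕ) : ℤ) + 1) := rfl

lemma Dmat_rec (d n m : ℕ) :
    (Dmat d n (m + 1)).det = cB (d + n) n * (Dmat d 1 m).det - (Dmat d (n + 1) m).det := by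
  rw [Matrix.det_succ_column_zero, Fin.sum_univ_succ, Fin.sum_univ_succ]
  have h00 : Dmat d n (m + 1) 0 0 = cB (d + n) n := by
    have hc : ((0 : Fin (m + 2)) : ℕ) = 0 := rfl
    rw [Dmat_apply, if_pos hc, show ((n : ℤ) + (((0 : Fin (m + 2)) : ℕ) : ℤ)) = ((n : ℕ) : ℤ)
      by simp, Hq_ofNat]
  have hsub0 : (Dmat d n (m + 1)).submatrix (Fin.succAbove 0) Fin.succ = Dmat d 1 m := by
    funext i j
    rw [Matrix.submatrix_apply, Fin.succAbove_zero, Dmat_apply, Dmat_apply,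
        if_neg (by simp [Fin.val_succ])]
    by_cases hi : (i : ℕ) = 0
    · rw [if_pos hi, Fin.val_succ, Fin.val_succ, hi]
      congr 1
      push_cast
      ring
    · rw [if_neg hi, Fin.val_succ, Fin.val_succ]
      congr 1
      push_cast
      ring
  have h10 : Dmat d n (m + 1) 1 0 = 1 := by
    rw [Dmat_apply, if_neg (by simp),
        show ((((0 : Fin (m + 2)) : ℕ) : ℤ) - (((1 : Fin (m + 2)) : ℕ) : ℤ) + 1) = 0 by simp,
        Hq_zero]
  have hsub1 : (Dmat d n (m + 1)).submatrix (Fin.succAbove 1) Fin.succ = Dmat d (n + 1) m := by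
    funext i j
    rw [Matrix.submatrix_apply, Dmat_apply, Dmat_apply]
    by_cases hi : (i : ℕ) = 0
    · have hi0 : i = 0 := Fin.ext hi
      subst hi0
      have hc : ((Fin.castSucc (0 : Fin (m + 1)) : Fin (m + 2)) : ℕ) = 0 := rfl
      rw [Fin.succAbove_of_castSucc_lt _ _ (by simp [Fin.lt_def]), if_pos hc,
          if_pos hi]
      congr 1
      rw [Fin.val_succ]
      push_cast
      ring
    · rw [Fin.succAbove_of_le_castSucc _ _ (by simp [Fin.le_def]; omega),
          if_neg (by simp [Fin.val_succ]), if_neg hi, Fin.val_succ, Fin.val_succ]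
      congr 1
      push_cast
      ring
  have hrest : ∀ i : Fin m, Dmat d n (m + 1) i.succ.succ 0 = 0 := by
    intro i
    rw [Dmat_apply, if_neg (by simp [Fin.val_succ])]
    apply Hq_neg
    simp only [Fin.val_succ, Fin.val_zero]
    push_cast
    omega
  simp only [Fin.succ_zero_eq_one]
  rw [h00, hsub0, h10, hsub1]
  have hzero : ∑ i : Fin m,
      (-1) ^ ((i.succ.succ : Fin (m + 2)) : ℕ) * Dmat d n (m + 1) i.succ.succ 0
      * ((Dmat d n (m + 1)).submatrix (Fin.succAbove i.succ.succ) Fin.succ).det = 0 := by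
    apply Finset.sum_eq_zero
    intro i _
    rw [hrest i, mul_zero, zero_mul]
  rw [hzero]
  simp
  ring

lemma detD : ∀ m n d : ℕ, (Dmat d n m).det = cB (n + m - 1) m * cB (n + d) (n + m) := by
  intro m
  induction m with
  | zero =>
    intro n d
    have hc : ((0 : Fin 1) : ℕ) = 0 := rfl
    rw [Matrix.det_fin_one, Dmat_apply, if_pos hc,
        show ((n : ℤ) + (((0 : Fin 1) : ℕ) : ℤ)) = ((n : ℕ) : ℤ) by simp, Hq_ofNat]
    rw [Nat.add_zero, cB_zero_right, one_mul, Nat.add_comm d n]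
  | succ m ih =>
    intro n d
    rw [Dmat_rec, ih 1 d, ih (n + 1) d]
    rw [show (1 : ℕ) + m - 1 = m by omega, show n + 1 + m - 1 = n + m by omega, cB_self, one_mul,
        show (1 : ℕ) + d = d + 1 by omega, show (1 : ℕ) + m = m + 1 by omega,
        show n + 1 + d = n + d + 1 by omega, show n + 1 + m = n + m + 1 by omega,
        show n + (m + 1) - 1 = n + m by omega, show n + (m + 1) = n + m + 1 by omega,
        show d + n = n + d by omega]
    linear_combination -identity_I d n m


open Classical in
/-- The quantum binomial `[n choose k] = ([n][n-1]⋯[n-k+1])/([k][k-1]⋯[1])`. -/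
noncomputable def qbinom (n k : ℕ) : LaurentPolynomial ℤ :=
  if h : ∃ c, (∏ t ∈ Finset.range k, qint (t + 1)) * c = ∏ t ∈ Finset.range k, qint (n - t)
  then h.choose else 0

/-- `h_z` in `N` variables over `ℤ`, with `h_z = 0` for `z < 0`. -/
noncomputable def hZ (N : ℕ) (z : ℤ) : MvPolynomial (Fin N) ℤ :=
  if 0 ≤ z then hsymm (Fin N) ℤ z.toNat else 0

/-- The Schur polynomial in `N` variables over `ℤ`, via the Jacobi–Trudi identity. -/
noncomputable def schur (N : ℕ) (l : List ℕ) : MvPolynomial (Fin N) ℤ :=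
  Matrix.det (Matrix.of fun i j : Fin l.length =>
    hZ N ((l.get i : ℤ) - (i : ℤ) + (j : ℤ)))

lemma qbinom_eq_cB (n k : ℕ) : qbinom n k = cB n k := by
  rw [qbinom]
  have hex : ∃ c, (∏ t ∈ Finset.range k, qint (t + 1)) * c = ∏ t ∈ Finset.range k, qint (n - t) :=
    ⟨cB n k, qfact_mul_cB n k⟩
  rw [dif_pos hex]
  apply cB_cancel k
  rw [qfact_mul_cB]
  exact hex.choose_spec

lemma aeval_hZ (d : ℕ) (z : ℤ) :
    aeval (fun t : Fin (d + 1) => T (2 * (t : ℤ) - (d : ℤ))) (hZ (d + 1) z) = Hq d z := by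
  rw [hZ, Hq]
  split_ifs with h
  · exact aeval_hsymm d z.toNat
  · simp

/-- The plethysm `(s_{(n,1^m)} ∘ s_{(d)})(q, q⁻¹)`: since
`s_{(d)}(q,q⁻¹) = q^{-d} + q^{-d+2} + ⋯ + q^{d}` is a sum of `d+1` monic monomials,
it is the hook Schur polynomial in `d+1` variables evaluated at these monomials.
It equals `[n+m−1 choose m] · [n+d choose n+m]`. -/
theorem hook_plethysm_eq_qbinom_product (d n m : ℕ) (hn : 1 ≤ n) :
    MvPolynomial.aeval (fun t : Fin (d + 1) => T (2 * (t : ℤ) - (d : ℤ)))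
        (schur (d + 1) (n :: List.replicate m 1)) =
      qbinom (n + m - 1) m * qbinom (n + d) (n + m) := by
  classical
  have hlen : (n :: List.replicate m 1).length = m + 1 := by simp
  rw [schur, ← Matrix.det_submatrix_equiv_self (finCongr hlen.symm), AlgHom.map_det]
  have hget : ∀ i : Fin (n :: List.replicate m 1).length,
      (n :: List.replicate m 1).get i = if (i : ℕ) = 0 then n else 1 := by
    rintro ⟨iv, hiv⟩
    cases iv with
    | zero => rfl
    | succ k =>
      rw [if_neg (Nat.succ_ne_zero k)]
      simp [List.get]
  have hmat : (MvPolynomial.aeval (fun t : Fin (d + 1) => T (2 * (t : ℤ) - (d : ℤ)))).mapMatrix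
      ((Matrix.of fun i j : Fin (n :: List.replicate m 1).length =>
        hZ (d + 1) (((n :: List.replicate m 1).get i : ℤ) - (i : ℤ) + (j : ℤ))).submatrix
          (finCongr hlen.symm) (finCongr hlen.symm)) = Dmat d n m := by
    funext i j
    rw [AlgHom.mapMatrix_apply, Matrix.map_apply, Matrix.submatrix_apply, Matrix.of_apply,
        hget, aeval_hZ, Dmat_apply]
    have hival : ((finCongr hlen.symm i : Fin (n :: List.replicate m 1).length) : ℕ)
        = (i : ℕ) := rfl
    have hjval : ((finCongr hlen.symm j : Fin (n :: List.replicate m 1).length) : ℕ)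
        = (j : ℕ) := rfl
    rw [hival, hjval]
    by_cases hi : (i : ℕ) = 0
    · rw [if_pos hi, if_pos hi]
      congr 1
      rw [hi]
      push_cast
      ring
    · rw [if_neg hi, if_neg hi]
      congr 1
      push_cast
      ring
  rw [hmat, detD m n d, qbinom_eq_cB, qbinom_eq_cB]
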